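/- Fix 1 ≤ m ≤ n and embed U_m in U_n as the pattern subgroup U_m = {u ∈ U_n : u_{ij} ≠ 0 for i ≠ j implies i < j ≤ m}. Then SInd_{U_m}^{U_n}(χ) = Ind_{U_m}^{U_n}(χ) for every superclass function χ of U_m. -/

import Mathlib

/-!
STATEMENT 10: Fix 1 ≤ m ≤ n and embed U_m in U_n as the pattern subgroup
U_m = {u ∈ U_n : u_{ij} ≠ 0 for i ≠ j implies i < j ≤ m}.  Then
SInd_{U_m}^{U_n}(χ) = Ind_{U_m}^{U_n}(χ) for every superclass function χ of U_m.
(Indices here are 0-based: the 1-based condition j ≤ m reads (j:ℕ)+1 ≤ m.)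
-/
open scoped Classical

noncomputable section

def setFinset {α : Type*} [Fintype α] (S : Set α) : Finset α :=
  Finset.univ.filter (· ∈ S)

/-- A strict partial order on `{1,…,n}` that is a subrelation of the usual order. -/
def IsPatternOrder {n : ℕ} (P : Fin n → Fin n → Prop) : Prop :=
  (∀ i j, P i j → i < j) ∧ ∀ i j k, P i j → P j k → P i k

/-- The pattern group `U_P` of unipotent upper-triangular matrices supported on `P`. -/
def patternGroup (F : Type*) [Field F] {n : ℕ} (P : Fin n → Fin n → Prop) :
    Set (Matrix (Fin n) (Fin n) F) :=
  {u | (∀ i, u i i = 1) ∧ ∀ i j, i ≠ j → u i j ≠ 0 → P i j}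

/-- `χ` is constant on the superclasses of `G`: `u ~ v` iff `v − 1 ∈ G(u−1)G`. -/
def IsSuperclassFn {A : Type*} [Ring A] (G : Set A) (χ : A → ℂ) : Prop :=
  ∀ u ∈ G, ∀ v ∈ G, (∃ x ∈ G, ∃ y ∈ G, v - 1 = x * (u - 1) * y) → χ u = χ v

/-- Superinduction `SInd_H^G(χ)(g) = (1/(|G||H|)) Σ_{x,y∈G} χ̇(x(g−1)y + 1)`. -/
def SInd {A : Type*} [Ring A] [Fintype A] (G H : Set A) (χ : A → ℂ) (g : A) : ℂ :=
  (((setFinset G).card : ℂ) * ((setFinset H).card : ℂ))⁻¹ *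
    ∑ x ∈ setFinset G, ∑ y ∈ setFinset G,
      if x * (g - 1) * y + 1 ∈ H then χ (x * (g - 1) * y + 1) else 0

/-- Induction `Ind_H^G(χ)(g) = (1/|H|) Σ_{y∈G} χ̇(y⁻¹ g y)`. -/
def Ind {A : Type*} [Ring A] [Fintype A] (G H : Set A) (χ : A → ℂ) (g : A) : ℂ :=
  ((setFinset H).card : ℂ)⁻¹ *
    ∑ y ∈ setFinset G,
      if Ring.inverse y * g * y ∈ H then χ (Ring.inverse y * g * y) else 0

/-- `U_m` embedded in `U_n` (0-based indices: 1-based `i < j ≤ m`). -/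
def UmSub (F : Type*) [Field F] (n m : ℕ) : Set (Matrix (Fin n) (Fin n) F) :=
  {u | (∀ i, u i i = 1) ∧ ∀ i j, i ≠ j → u i j ≠ 0 → i < j ∧ (j : ℕ) + 1 ≤ m}

/-! ### Auxiliary development -/

namespace SIndAux

variable {F : Type*} [Field F] {n : ℕ}

/-- Matrices supported on a pattern `Q`. -/
def PSet (F : Type*) [Field F] (n : ℕ) (Q : Fin n → Fin n → Prop) :
    Set (Matrix (Fin n) (Fin n) F) := {a | ∀ i j, a i j ≠ 0 → Q i j}

lemma PSet.zero_mem {Q : Fin n → Fin n → Prop} : (0 : Matrix (Fin n) (Fin n) F) ∈ PSet F n Q := by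
  intro i j h; simp at h

lemma PSet.add_mem {Q : Fin n → Fin n → Prop} {a b : Matrix (Fin n) (Fin n) F}
    (ha : a ∈ PSet F n Q) (hb : b ∈ PSet F n Q) : a + b ∈ PSet F n Q := by
  intro i j h
  by_cases h1 : a i j = 0
  · exact hb i j (by simpa [Matrix.add_apply, h1] using h)
  · exact ha i j h1

lemma PSet.neg_mem {Q : Fin n → Fin n → Prop} {a : Matrix (Fin n) (Fin n) F}
    (ha : a ∈ PSet F n Q) : -a ∈ PSet F n Q := by
  intro i j h; exact ha i j (by simpa using h)

lemma PSet.mul_mem {Q R T : Fin n → Fin n → Prop} {a b : Matrix (Fin n) (Fin n) F}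
    (ha : a ∈ PSet F n Q) (hb : b ∈ PSet F n R)
    (hT : ∀ i j k, Q i j → R j k → T i k) : a * b ∈ PSet F n T := by
  intro i k h
  rw [Matrix.mul_apply] at h
  obtain ⟨j, -, hj⟩ := Finset.exists_ne_zero_of_sum_ne_zero h
  exact hT i j k (ha i j (left_ne_zero_of_mul hj)) (hb j k (right_ne_zero_of_mul hj))

lemma PSet.sum_mem {Q : Fin n → Fin n → Prop} {ι : Type*} {s : Finset ι}
    {f : ι → Matrix (Fin n) (Fin n) F} (h : ∀ i ∈ s, f i ∈ PSet F n Q) :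
    (∑ i ∈ s, f i) ∈ PSet F n Q := by
  classical
  induction s using Finset.induction with
  | empty => simpa using PSet.zero_mem
  | insert _ _ hx ih =>
    rw [Finset.sum_insert hx]
    exact PSet.add_mem (h _ (Finset.mem_insert_self _ _))
      (ih fun i hi => h i (Finset.mem_insert_of_mem hi))

lemma PSet.eq_zero {a : Matrix (Fin n) (Fin n) F}
    (ha : a ∈ PSet F n (fun _ _ => False)) : a = 0 := by
  ext i j; by_contra h; exact ha i j h

lemma PSet.pow_bound {Q : Fin n → Fin n → Prop} (hQ : ∀ i j, Q i j → i < j)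
    {a : Matrix (Fin n) (Fin n) F} (ha : a ∈ PSet F n Q) :
    ∀ p (i j : Fin n), (a ^ p) i j ≠ 0 → (i : ℕ) + p ≤ (j : ℕ) := by
  intro p
  induction p with
  | zero =>
    intro i j h
    rw [pow_zero] at h
    rcases eq_or_ne i j with rfl | hne
    · omega
    · exact absurd (Matrix.one_apply_ne hne) h
  | succ p ih =>
    intro i j h
    rw [pow_succ, Matrix.mul_apply] at h
    obtain ⟨l, -, hl⟩ := Finset.exists_ne_zero_of_sum_ne_zero h
    have h1 := ih i l (left_ne_zero_of_mul hl)
    have h2 : (l : ℕ) < (j : ℕ) := hQ l j (ha l j (right_ne_zero_of_mul hl))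
    omega

lemma PSet.pow_eq_zero {Q : Fin n → Fin n → Prop} (hQ : ∀ i j, Q i j → i < j)
    {a : Matrix (Fin n) (Fin n) F} (ha : a ∈ PSet F n Q) : a ^ n = 0 := by
  ext i j
  by_contra h
  have := PSet.pow_bound hQ ha n i j h
  have := j.isLt
  omega

lemma PSet.exists_inv {Q : Fin n → Fin n → Prop} (hQ : ∀ i j, Q i j → i < j)
    (htr : ∀ i j k, Q i j → Q j k → Q i k)
    {a : Matrix (Fin n) (Fin n) F} (ha : a ∈ PSet F n Q) :
    ∃ b ∈ PSet F n Q, (1 + a) * (1 + b) = 1 ∧ (1 + b) * (1 + a) = 1 := by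
  set S : Matrix (Fin n) (Fin n) F := ∑ i ∈ Finset.range (n + 1), (-a) ^ i with hS
  have hpow : ∀ p, (-a) ^ (p + 1) ∈ PSet F n Q := by
    intro p
    induction p with
    | zero => simpa using PSet.neg_mem ha
    | succ p ih => rw [pow_succ]; exact PSet.mul_mem ih (PSet.neg_mem ha) htr
  have hSb : S - 1 ∈ PSet F n Q := by
    have hS' : S = (∑ i ∈ Finset.range n, (-a) ^ (i + 1)) + 1 := by
      rw [hS, Finset.sum_range_succ']; simp
    have : S - 1 = ∑ i ∈ Finset.range n, (-a) ^ (i + 1) := by rw [hS']; abel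
    rw [this]
    exact PSet.sum_mem fun i _ => hpow i
  have hz : (-a) ^ (n + 1) = 0 := by
    rw [pow_succ, PSet.pow_eq_zero hQ (PSet.neg_mem ha), zero_mul]
  have hgeom : S * ((-a) - 1) = (-a) ^ (n + 1) - 1 := geom_sum_mul (-a) (n + 1)
  have h1 : S * (1 + a) = 1 := by
    have e : (-a : Matrix (Fin n) (Fin n) F) - 1 = -(1 + a) := by abel
    rw [e, hz, zero_sub, mul_neg] at hgeom
    exact neg_injective hgeom
  have hc : Commute (1 + a) S := by
    apply Commute.add_left (Commute.one_left S)
    apply Commute.sum_right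
    intro i _
    exact ((Commute.refl a).neg_right.pow_right i)
  have h2 : (1 + a) * S = 1 := by rw [hc.eq, h1]
  refine ⟨S - 1, hSb, ?_, ?_⟩
  · have e : (1 : Matrix (Fin n) (Fin n) F) + (S - 1) = S := by abel
    rw [e, h2]
  · have e : (1 : Matrix (Fin n) (Fin n) F) + (S - 1) = S := by abel
    rw [e, h1]

/-- Bridge between the "unitriangular with pattern" description and `PSet`. -/
lemma mem_pattern_iff {P : Fin n → Fin n → Prop} (hP : ∀ i, ¬ P i i)
    {u : Matrix (Fin n) (Fin n) F} :
    ((∀ i, u i i = 1) ∧ ∀ i j, i ≠ j → u i j ≠ 0 → P i j) ↔ u - 1 ∈ PSet F n P := by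
  constructor
  · rintro ⟨h1, h2⟩ i j hne
    rcases eq_or_ne i j with rfl | hij
    · exact absurd (by simp [Matrix.sub_apply, h1 i]) hne
    · exact h2 i j hij (by simpa [Matrix.sub_apply, Matrix.one_apply_ne hij] using hne)
  · intro h
    constructor
    · intro i
      by_contra hc
      have h0 : (u - 1) i i ≠ 0 := by
        simpa [Matrix.sub_apply, sub_eq_zero] using hc
      exact hP i (h i i h0)
    · intro i j hij hne
      exact h i j (by simpa [Matrix.sub_apply, Matrix.one_apply_ne hij] using hne)

section FixedM

variable (m : ℕ)

/-- `Qh`: pattern of the subgroup `U_m`. -/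
abbrev Qh : Fin n → Fin n → Prop := fun i j => i < j ∧ (j : ℕ) + 1 ≤ m
/-- `Qk`: complementary pattern (columns beyond `m`). -/
abbrev Qk : Fin n → Fin n → Prop := fun i j => i < j ∧ m ≤ (j : ℕ)
/-- `Qn`: full strictly-upper pattern. -/
abbrev Qn : Fin n → Fin n → Prop := fun i j : Fin n => i < j

variable {m}

lemma Qh_lt : ∀ i j : Fin n, Qh m i j → i < j := fun _ _ h => h.1
lemma Qh_trans : ∀ i j k : Fin n, Qh m i j → Qh m j k → Qh m i k :=
  fun _ _ _ h1 h2 => ⟨lt_trans h1.1 h2.1, h2.2⟩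
lemma Qn_lt : ∀ i j : Fin n, Qn i j → i < j := fun _ _ h => h
lemma Qn_trans : ∀ i j k : Fin n, Qn i j → Qn j k → Qn i k :=
  fun _ _ _ h1 h2 => lt_trans h1 h2

lemma mem_UmSub_iff {u : Matrix (Fin n) (Fin n) F} :
    u ∈ UmSub F n m ↔ u - 1 ∈ PSet F n (Qh m) :=
  mem_pattern_iff (fun i => by simp [Qh])

lemma mem_UnGroup_iff {u : Matrix (Fin n) (Fin n) F} :
    u ∈ patternGroup F (fun i j : Fin n => i < j) ↔ u - 1 ∈ PSet F n Qn :=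
  mem_pattern_iff (fun i => by simp)

/-- `k · h = 0`. -/
lemma kh_eq_zero {x b : Matrix (Fin n) (Fin n) F}
    (hx : x ∈ PSet F n (Qk m)) (hb : b ∈ PSet F n (Qh m)) : x * b = 0 := by
  apply PSet.eq_zero
  apply PSet.mul_mem hx hb (T := fun _ _ => False)
  rintro i j k ⟨_, hmj⟩ ⟨hjk, hkm⟩
  have : (j : ℕ) < (k : ℕ) := hjk
  omega

/-- Absorption: for `u ∈ K = 1 + PSet Qk` and `c ∈ PSet Qh`, `u * c = c`. -/
lemma absorb {u c : Matrix (Fin n) (Fin n) F}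
    (hu : u - 1 ∈ PSet F n (Qk m)) (hc : c ∈ PSet F n (Qh m)) : u * c = c := by
  have h0 : (u - 1) * c = 0 := kh_eq_zero hu hc
  have : u * c = (u - 1) * c + c := by noncomm_ring
  rw [this, h0, zero_add]

/-- Existence of the decomposition `w = h1 * u` with `h1 ∈ H`, `u ∈ K`. -/
lemma exists_decomp {w : Matrix (Fin n) (Fin n) F} (hw : w - 1 ∈ PSet F n Qn) :
    ∃ h1 u : Matrix (Fin n) (Fin n) F,
      h1 - 1 ∈ PSet F n (Qh m) ∧ u - 1 ∈ PSet F n (Qk m) ∧ w = h1 * u := by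
  set p : Matrix (Fin n) (Fin n) F :=
    Matrix.of (fun i j => if (j : ℕ) + 1 ≤ m then (w - 1) i j else 0) with hp
  have hpm : p ∈ PSet F n (Qh m) := by
    intro i j h
    rw [hp, Matrix.of_apply] at h
    by_cases hj : (j : ℕ) + 1 ≤ m
    · rw [if_pos hj] at h
      exact ⟨hw i j h, hj⟩
    · rw [if_neg hj] at h; exact absurd rfl h
  have hκm : (w - 1) - p ∈ PSet F n (Qk m) := by
    intro i j h
    rw [Matrix.sub_apply, hp, Matrix.of_apply] at h
    by_cases hj : (j : ℕ) + 1 ≤ m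
    · rw [if_pos hj, sub_self] at h; exact absurd rfl h
    · rw [if_neg hj, sub_zero] at h
      exact ⟨hw i j h, by omega⟩
  obtain ⟨q, hq, hq1, hq2⟩ := PSet.exists_inv Qh_lt Qh_trans hpm
  refine ⟨1 + p, (1 + q) * w, by simpa using hpm, ?_, ?_⟩
  · have e : (1 + q) * w - 1 = (1 + q) * ((w - 1) - p) := by
      have e2 : (1 + q) * ((w - 1) - p) = (1 + q) * w - (1 + q) * (1 + p) := by noncomm_ring
      rw [e2, hq2]
    rw [e]
    have e3 : (1 + q) * ((w - 1) - p) = ((w - 1) - p) + q * ((w - 1) - p) := by noncomm_ring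
    rw [e3]
    refine PSet.add_mem hκm (PSet.mul_mem hq hκm ?_)
    rintro i j k ⟨hij, _⟩ ⟨hjk, hmk⟩
    exact ⟨lt_trans hij hjk, hmk⟩
  · rw [← mul_assoc, hq1, one_mul]

/-- Inverses in the full unitriangular group. -/
lemma exists_inv_G {x : Matrix (Fin n) (Fin n) F} (hx : x - 1 ∈ PSet F n Qn) :
    ∃ x' : Matrix (Fin n) (Fin n) F,
      x' - 1 ∈ PSet F n Qn ∧ x * x' = 1 ∧ x' * x = 1 := by
  obtain ⟨b, hb, h1, h2⟩ := PSet.exists_inv Qn_lt Qn_trans hx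
  have e : (1 : Matrix (Fin n) (Fin n) F) + (x - 1) = x := by abel
  rw [e] at h1 h2
  exact ⟨1 + b, by simpa using hb, h1, h2⟩

lemma mul_G_mem {x y : Matrix (Fin n) (Fin n) F}
    (hx : x - 1 ∈ PSet F n Qn) (hy : y - 1 ∈ PSet F n Qn) :
    x * y - 1 ∈ PSet F n Qn := by
  have e : x * y - 1 = (x - 1) * (y - 1) + ((x - 1) + (y - 1)) := by noncomm_ring
  rw [e]
  exact PSet.add_mem (PSet.mul_mem hx hy Qn_trans) (PSet.add_mem hx hy)

/-- The key pointwise identity between the SInd and Ind summands. -/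
lemma key {χ : Matrix (Fin n) (Fin n) F → ℂ} (hχ : IsSuperclassFn (UmSub F n m) χ)
    {g x y y' : Matrix (Fin n) (Fin n) F}
    (hg : g - 1 ∈ PSet F n Qn) (hx : x - 1 ∈ PSet F n Qn) (hy : y - 1 ∈ PSet F n Qn)
    (hy' : y' - 1 ∈ PSet F n Qn) (hyy' : y * y' = 1) (hy'y : y' * y = 1) :
    (if x * (g - 1) * y + 1 ∈ UmSub F n m then χ (x * (g - 1) * y + 1) else 0)
      = (if y' * g * y ∈ UmSub F n m then χ (y' * g * y) else 0) := by
  have one_mem_Um : (1 : Matrix (Fin n) (Fin n) F) ∈ UmSub F n m := by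
    rw [mem_UmSub_iff]; simpa using (PSet.zero_mem (F := F) (n := n) (Q := Qh m))
  by_cases hb : x * (g - 1) * y + 1 ∈ UmSub F n m
  · -- forward direction
    have hbP : x * (g - 1) * y ∈ PSet F n (Qh m) := by
      have := (mem_UmSub_iff (m := m)).mp hb
      simpa using this
    obtain ⟨x', hx', hxx', hx'x⟩ := exists_inv_G hx
    have hw' : y' * x' - 1 ∈ PSet F n Qn := mul_G_mem hy' hx'
    obtain ⟨h1, u, hh1, hu, hdec⟩ := exists_decomp hw'
    have heq : y' * g * y = h1 * (x * (g - 1) * y) + 1 := by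
      have e1 : y' * g * y = y' * (g - 1) * y + y' * y := by noncomm_ring
      have e2 : y' * (g - 1) * y = (y' * x') * (x * (g - 1) * y) := by
        have : (y' * x') * (x * (g - 1) * y) = y' * (x' * x) * ((g - 1) * y) := by
          noncomm_ring
        rw [this, hx'x, mul_one]
        noncomm_ring
      rw [e1, hy'y, e2, hdec, mul_assoc, absorb hu hbP]
    have hmemP : h1 * (x * (g - 1) * y) ∈ PSet F n (Qh m) := by
      have e : h1 * (x * (g - 1) * y) =
          (h1 - 1) * (x * (g - 1) * y) + x * (g - 1) * y := by noncomm_ring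
      rw [e]
      exact PSet.add_mem (PSet.mul_mem hh1 hbP Qh_trans) hbP
    have hmem2 : y' * g * y ∈ UmSub F n m := by
      rw [mem_UmSub_iff, heq]
      simpa using hmemP
    rw [if_pos hb, if_pos hmem2]
    apply hχ _ hb _ hmem2
    refine ⟨h1, (mem_UmSub_iff).mpr (by simpa using hh1), 1, one_mem_Um, ?_⟩
    rw [heq]
    noncomm_ring
  · -- both sides vanish
    rw [if_neg hb]
    by_cases hc : y' * g * y ∈ UmSub F n m
    · exfalso
      have hcP : y' * (g - 1) * y ∈ PSet F n (Qh m) := by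
        have h' := (mem_UmSub_iff (m := m)).mp hc
        have e : y' * g * y - 1 = y' * (g - 1) * y := by
          have e1 : y' * g * y = y' * (g - 1) * y + y' * y := by noncomm_ring
          rw [e1, hy'y]; abel
        rwa [e] at h'
      have hw : x * y - 1 ∈ PSet F n Qn := mul_G_mem hx hy
      obtain ⟨h1, u, hh1, hu, hdec⟩ := exists_decomp hw
      have e4 : x * (g - 1) * y = h1 * (y' * (g - 1) * y) := by
        have e5 : x * (g - 1) * y = (x * y) * (y' * (g - 1) * y) := by
          have : (x * y) * (y' * (g - 1) * y) = x * (y * y') * ((g - 1) * y) := by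
            noncomm_ring
          rw [this, hyy', mul_one]
          noncomm_ring
        rw [e5, hdec, mul_assoc, absorb hu hcP]
      apply hb
      rw [mem_UmSub_iff]
      have e6 : x * (g - 1) * y + 1 - 1 = h1 * (y' * (g - 1) * y) := by rw [← e4]; abel
      rw [e6]
      have e7 : h1 * (y' * (g - 1) * y) =
          (h1 - 1) * (y' * (g - 1) * y) + y' * (g - 1) * y := by noncomm_ring
      rw [e7]
      exact PSet.add_mem (PSet.mul_mem hh1 hcP Qh_trans) hcP
    · rw [if_neg hc]

end FixedM

end SIndAux

open SIndAux in
theorem sind_eq_ind_Um_in_Un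
    {n m : ℕ} (F : Type*) [Field F] [Fintype F]
    (hm : 1 ≤ m) (hmn : m ≤ n) :
    ∀ χ : Matrix (Fin n) (Fin n) F → ℂ, IsSuperclassFn (UmSub F n m) χ →
      ∀ g ∈ patternGroup F (fun i j : Fin n => i < j),
        SInd (patternGroup F (fun i j : Fin n => i < j)) (UmSub F n m) χ g =
          Ind (patternGroup F (fun i j : Fin n => i < j)) (UmSub F n m) χ g := by
  intro χ hχ g hg
  classical
  set Gs := patternGroup F (fun i j : Fin n => i < j) with hGs
  have hgP : g - 1 ∈ PSet F n Qn := (mem_UnGroup_iff).mp hg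
  have memG : ∀ {z : Matrix (Fin n) (Fin n) F}, z ∈ setFinset Gs → z - 1 ∈ PSet F n Qn := by
    intro z hz
    rw [setFinset, Finset.mem_filter] at hz
    exact (mem_UnGroup_iff).mp hz.2
  -- pointwise equality of summands
  have hpt : ∀ y ∈ setFinset Gs, ∀ x ∈ setFinset Gs,
      (if x * (g - 1) * y + 1 ∈ UmSub F n m then χ (x * (g - 1) * y + 1) else 0)
        = (if Ring.inverse y * g * y ∈ UmSub F n m then χ (Ring.inverse y * g * y) else 0) := by
    intro y hy x hx
    obtain ⟨y', hy', hyy', hy'y⟩ := exists_inv_G (memG hy)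
    have hinv : Ring.inverse y = y' := by
      have : Ring.inverse ((⟨y, y', hyy', hy'y⟩ : (Matrix (Fin n) (Fin n) F)ˣ) :
          Matrix (Fin n) (Fin n) F) = y' := by
        rw [Ring.inverse_unit]
        rfl
      simpa using this
    rw [hinv]
    exact key (m := m) hχ hgP (memG hx) (memG hy) hy' hyy' hy'y
  -- cardinality of G is nonzero
  have h1G : (1 : Matrix (Fin n) (Fin n) F) ∈ setFinset Gs := by
    rw [setFinset, Finset.mem_filter]
    refine ⟨Finset.mem_univ _, ?_⟩
    rw [hGs, mem_UnGroup_iff]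
    simpa using (PSet.zero_mem (F := F) (n := n) (Q := Qn))
  have hcG : ((setFinset Gs).card : ℂ) ≠ 0 := by
    have hpos : 0 < (setFinset Gs).card := Finset.card_pos.mpr ⟨1, h1G⟩
    exact_mod_cast Nat.cast_ne_zero.mpr hpos.ne'
  unfold SInd Ind
  have hsum : ∑ x ∈ setFinset Gs, ∑ y ∈ setFinset Gs,
      (if x * (g - 1) * y + 1 ∈ UmSub F n m then χ (x * (g - 1) * y + 1) else 0)
      = ((setFinset Gs).card : ℂ) * ∑ y ∈ setFinset Gs,
          (if Ring.inverse y * g * y ∈ UmSub F n m then χ (Ring.inverse y * g * y) else 0) := by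
    rw [Finset.sum_comm]
    rw [Finset.mul_sum]
    apply Finset.sum_congr rfl
    intro y hy
    rw [Finset.sum_congr rfl (fun x hx => hpt y hy x hx), Finset.sum_const, nsmul_eq_mul]
  rw [hsum, mul_inv, mul_comm (((setFinset Gs).card : ℂ))⁻¹, mul_assoc, ← mul_assoc (((setFinset Gs).card : ℂ))⁻¹, inv_mul_cancel₀ hcG, one_mul]
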